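/- Let T be a commutative ring, let R be a semiprime T-algebra, let n ≥ 1, and let K = T(n,R) be the algebra of upper triangular n×n matrices over R. Then every T-algebra automorphism φ of K is a product of an inner automorphism and a ring automorphism: there exist an invertible element u of K and a T-algebra automorphism α of R such that φ(A) = u · ᾱ(A) · u⁻¹ for all A ∈ K, where ᾱ applies α entrywise. -/

import Mathlib

/-- The `T`-subalgebra of upper triangular `n × n` matrices over `R`. -/
def triangularSubalgebra (T R : Type*) [CommRing T] [Ring R] [Algebra T R] (n : ℕ) :
    Subalgebra T (Matrix (Fin n) (Fin n) R) where
  carrier := {A | ∀ ⦃i j : Fin n⦄, j < i → A i j = 0}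
  add_mem' := fun {A B} hA hB i j hij => by
    simp [Matrix.add_apply, hA hij, hB hij]
  mul_mem' := fun {A B} hA hB i j hij => by
    simp only [Matrix.mul_apply]
    refine Finset.sum_eq_zero fun k _ => ?_
    rcases lt_or_ge k i with h | h
    · rw [hA h, zero_mul]
    · rw [hB (lt_of_lt_of_le hij h), mul_zero]
  algebraMap_mem' := fun t i j hij => by
    simp [Matrix.algebraMap_matrix_apply, (ne_of_lt hij).symm]

/-- The set of strictly upper triangular matrices inside the triangular matrix algebra. -/
def strictlyUpper (T R : Type*) [CommRing T] [Ring R] [Algebra T R] (n : ℕ) :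
    Set (triangularSubalgebra T R n) :=
  {A | ∀ i j : Fin n, j ≤ i → (A : Matrix (Fin n) (Fin n) R) i j = 0}

/-- The entrywise action of an automorphism `α` of `R` on the triangular matrix algebra. -/
def entrywiseMap (T R : Type*) [CommRing T] [Ring R] [Algebra T R] (n : ℕ)
    (α : R ≃ₐ[T] R) (A : triangularSubalgebra T R n) : triangularSubalgebra T R n :=
  ⟨Matrix.of fun i j => α ((A : Matrix (Fin n) (Fin n) R) i j),
    fun i j hij => by simp [Matrix.of_apply, A.2 hij]⟩

namespace Stmt11Aux

section SP
variable {R : Type*} [Ring R]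

/-- Pointwise form of semiprimeness. -/
lemma sp_elem (hsp : ∀ I : TwoSidedIdeal R, (∀ x ∈ I, ∀ y ∈ I, x * y = 0) → I = ⊥)
    (x : R) (hx : ∀ r, x * r * x = 0) : x = 0 := by
  classical
  set S : Set R := {r | ∃ l : List (R × R), r = (l.map fun p => p.1 * x * p.2).sum} with hS
  have hzero : (0 : R) ∈ S := ⟨[], by simp⟩
  have hadd : ∀ {a b : R}, a ∈ S → b ∈ S → a + b ∈ S := by
    rintro a b ⟨la, rfl⟩ ⟨lb, rfl⟩
    exact ⟨la ++ lb, by simp⟩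
  have hneg : ∀ {a : R}, a ∈ S → -a ∈ S := by
    rintro a ⟨la, rfl⟩
    refine ⟨la.map fun p => (-p.1, p.2), ?_⟩
    rw [List.map_map]
    induction la with
    | nil => simp
    | cons p l ih =>
      simp only [List.map_cons, List.sum_cons, neg_add, ih]
      congr 1
      simp
  have hmull : ∀ {a b : R}, b ∈ S → a * b ∈ S := by
    rintro a b ⟨lb, rfl⟩
    refine ⟨lb.map fun p => (a * p.1, p.2), ?_⟩
    rw [List.map_map]
    induction lb with
    | nil => simp
    | cons p l ih =>
      simp only [List.map_cons, List.sum_cons, mul_add, ih]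
      congr 1
      simp [mul_assoc]
  have hmulr : ∀ {a b : R}, a ∈ S → a * b ∈ S := by
    rintro a b ⟨la, rfl⟩
    refine ⟨la.map fun p => (p.1, p.2 * b), ?_⟩
    rw [List.map_map]
    induction la with
    | nil => simp
    | cons p l ih =>
      simp only [List.map_cons, List.sum_cons, add_mul, ih]
      congr 1
      simp [mul_assoc]
  have hpair : ∀ a ∈ S, ∀ b ∈ S, a * b = 0 := by
    rintro a ⟨la, rfl⟩ b ⟨lb, rfl⟩
    induction la with
    | nil => simp
    | cons p la' iha =>
      simp only [List.map_cons, List.sum_cons, add_mul, iha, add_zero]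
      clear iha
      induction lb with
      | nil => simp
      | cons q lb' ihb =>
        simp only [List.map_cons, List.sum_cons, mul_add, ihb, add_zero]
        have h1 : p.1 * x * p.2 * (q.1 * x * q.2) = p.1 * (x * (p.2 * q.1) * x) * q.2 := by
          noncomm_ring
        rw [h1, hx, mul_zero, zero_mul]
  have hI := hsp (TwoSidedIdeal.mk' S hzero hadd hneg hmull hmulr) (by
    intro a ha b hb
    rw [TwoSidedIdeal.mem_mk'] at ha hb
    exact hpair a ha b hb)
  have hxS : x ∈ S := ⟨[(1, 1)], by simp⟩
  have : x ∈ TwoSidedIdeal.mk' S hzero hadd hneg hmull hmulr := by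
    rw [TwoSidedIdeal.mem_mk']; exact hxS
  rw [hI, TwoSidedIdeal.mem_bot] at this
  exact this

/-- If all products of `m` elements of the ideal generated by `x` vanish, then `x = 0`. -/
lemma sp_list (hsp : ∀ I : TwoSidedIdeal R, (∀ x ∈ I, ∀ y ∈ I, x * y = 0) → I = ⊥) :
    ∀ m : ℕ, 1 ≤ m → ∀ x : R,
      (∀ l : List (R × R), m ≤ l.length → (l.map fun p => p.1 * x * p.2).prod = 0) → x = 0 := by
  intro m
  induction m with
  | zero => omega
  | succ m ih =>
    intro _ x hx
    rcases Nat.eq_or_lt_of_le (Nat.one_le_iff_ne_zero.mpr (by omega) : 1 ≤ m + 1) with h1 | h1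
    · -- m + 1 = 1 : direct
      have := hx [(1, 1)] (by simp [← h1])
      simpa using this
    · -- m ≥ 1
      have hm : 1 ≤ m := by omega
      refine ih hm x ?_
      intro l hl
      rcases Nat.lt_or_ge l.length (m + 1) with hlen | hlen
      · -- l.length = m
        have hlen' : l.length = m := by omega
        set y := (l.map fun p => p.1 * x * p.2).prod with hy
        have hy0 : ∀ r : R, y * r * y = 0 := by
          intro r
          obtain ⟨p, l₀, rfl⟩ : ∃ p l₀, l = p :: l₀ := by
            cases l with
            | nil => simp at hlen'; omega
            | cons p l₀ => exact ⟨p, l₀, rfl⟩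
          have hll : l₀.length + 1 = m := by simpa using hlen'
          have := hx ((p :: l₀) ++ ((r * p.1, p.2) :: l₀)) (by
            simp only [List.length_append, List.length_cons]; omega)
          rw [List.map_append, List.prod_append, List.map_cons, List.prod_cons] at this
          rw [hy]
          calc (((p :: l₀).map fun p => p.1 * x * p.2).prod) * r *
                (((p :: l₀).map fun p => p.1 * x * p.2).prod)
              = (((p :: l₀).map fun p => p.1 * x * p.2).prod) *
                ((r * p.1 * x * p.2) * ((l₀.map fun p => p.1 * x * p.2)).prod) := by
                rw [List.map_cons, List.prod_cons]
                simp only [← mul_assoc]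
            _ = 0 := this
        exact (sp_elem hsp y hy0) ▸ rfl
      · exact hx l hlen

end SP

open Matrix

variable {T R : Type*} [CommRing T] [Ring R] [Algebra T R] {n : ℕ}

local notation "K" => triangularSubalgebra T R n

/-- Entry of an element of the triangular algebra. -/
def ent (A : triangularSubalgebra T R n) (i j : Fin n) : R :=
  (A : Matrix (Fin n) (Fin n) R) i j

lemma Kext {X Y : triangularSubalgebra T R n} (h : ∀ a b : Fin n, ent X a b = ent Y a b) :
    X = Y :=
  Subtype.ext (Matrix.ext h)

@[simp] lemma ent_add (X Y : triangularSubalgebra T R n) (a b : Fin n) :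
    ent (X + Y) a b = ent X a b + ent Y a b := by
  simp [ent]

@[simp] lemma ent_sub (X Y : triangularSubalgebra T R n) (a b : Fin n) :
    ent (X - Y) a b = ent X a b - ent Y a b := by
  simp [ent]

@[simp] lemma ent_zero (a b : Fin n) : ent (0 : triangularSubalgebra T R n) a b = 0 := by
  simp [ent]

@[simp] lemma ent_one (a b : Fin n) :
    ent (1 : triangularSubalgebra T R n) a b = if a = b then 1 else 0 := by
  simp [ent, Matrix.one_apply]

lemma ent_mul (X Y : triangularSubalgebra T R n) (a b : Fin n) :
    ent (X * Y) a b = ∑ y, ent X a y * ent Y y b := by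
  show ((X * Y : triangularSubalgebra T R n) : Matrix (Fin n) (Fin n) R) a b = _
  rw [MulMemClass.coe_mul, Matrix.mul_apply]
  rfl

@[simp] lemma ent_smul (t : T) (X : triangularSubalgebra T R n) (a b : Fin n) :
    ent (t • X) a b = t • ent X a b := by
  simp [ent]

/-- `Mel i j h r` : the matrix with single entry `r` at `(i,j)`, `i ≤ j`. -/
def Mel (i j : Fin n) (h : i ≤ j) (r : R) : triangularSubalgebra T R n :=
  ⟨Matrix.single i j r, fun a b hba => by
    apply Matrix.single_apply_of_ne
    rintro ⟨rfl, rfl⟩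
    exact absurd h (not_le.mpr hba)⟩

@[simp] lemma ent_Mel (i j : Fin n) (h : i ≤ j) (r : R) (a b : Fin n) :
    ent (Mel i j h r : triangularSubalgebra T R n) a b = if i = a ∧ j = b then r else 0 := rfl

lemma ent_Mel_same (i j : Fin n) (h : i ≤ j) (r : R) :
    ent (Mel i j h r : triangularSubalgebra T R n) i j = r := by simp

lemma Mel_zero (i j : Fin n) (h : i ≤ j) :
    (Mel i j h (0 : R) : triangularSubalgebra T R n) = 0 :=
  Subtype.ext (Matrix.single_zero i j)

lemma Mel_add (i j : Fin n) (h : i ≤ j) (r s : R) :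
    (Mel i j h (r + s) : triangularSubalgebra T R n) = Mel i j h r + Mel i j h s :=
  Subtype.ext (Matrix.single_add i j r s)

lemma Mel_smul (i j : Fin n) (h : i ≤ j) (t : T) (r : R) :
    (Mel i j h (t • r) : triangularSubalgebra T R n) = t • Mel i j h r :=
  Subtype.ext (Matrix.smul_single t i j r).symm

lemma Mel_mul_Mel (i j l : Fin n) (h : i ≤ j) (h' : j ≤ l) (r s : R) :
    (Mel i j h r : triangularSubalgebra T R n) * Mel j l h' s = Mel i l (h.trans h') (r * s) :=
  Subtype.ext (Matrix.single_mul_single_same r i j l s)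

lemma Mel_mul_Mel_ne {j k : Fin n} (hjk : j ≠ k) (i l : Fin n) (h : i ≤ j) (h' : k ≤ l)
    (r s : R) : (Mel i j h r : triangularSubalgebra T R n) * Mel k l h' s = 0 :=
  Subtype.ext (Matrix.single_mul_single_of_ne r i j k hjk s)

/-- diagonal idempotents -/
def eD (i : Fin n) : triangularSubalgebra T R n := Mel i i le_rfl 1

lemma sum_eD : (∑ i, eD i : triangularSubalgebra T R n) = 1 := by
  apply Kext
  intro a b
  have : ent (∑ i, eD i : triangularSubalgebra T R n) a b = ∑ i, ent (eD i : triangularSubalgebra T R n) a b := by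
    simp [ent, AddSubmonoidClass.coe_finset_sum, Matrix.sum_apply]
  rw [this, ent_one]
  by_cases hab : a = b
  · subst hab
    rw [Finset.sum_eq_single a (fun i _ hia => by simp [eD, hia]) (by simp)]
    simp [eD]
  · rw [if_neg hab]
    refine Finset.sum_eq_zero fun i _ => ?_
    simp only [eD, ent_Mel]
    rw [if_neg]
    rintro ⟨rfl, rfl⟩
    exact hab rfl

/-- The key Peirce computation at matrix level. -/
lemma stdBasis_conj (M : Matrix (Fin n) (Fin n) R) (i j : Fin n) (r s : R) :
    Matrix.single i i r * M * Matrix.single j j s = Matrix.single i j (r * M i j * s) := by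
  ext a b
  by_cases hb : b = j
  · subst hb
    rw [Matrix.mul_single_apply_same]
    by_cases ha : a = i
    · subst ha
      rw [Matrix.single_mul_apply_same, Matrix.single_apply_same]
    · rw [Matrix.single_mul_apply_of_ne r i i a b ha, zero_mul]
      rw [Matrix.single_apply_of_ne]
      rintro ⟨rfl, -⟩; exact ha rfl
  · rw [Matrix.mul_single_apply_of_ne s j j a b hb]
    rw [Matrix.single_apply_of_ne]
    rintro ⟨-, rfl⟩; exact hb rfl

lemma eD_mul_mul_eD (A : triangularSubalgebra T R n) (i j : Fin n) (h : i ≤ j) :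
    eD i * A * eD j = Mel i j h (ent A i j) := by
  apply Subtype.ext
  show Matrix.single i i (1 : R) * (A : Matrix (Fin n) (Fin n) R) * Matrix.single j j 1 = _
  rw [stdBasis_conj, one_mul, mul_one]
  rfl

lemma eD_mul_mul_eD_zero (A : triangularSubalgebra T R n) {i j : Fin n} (h : j < i) :
    eD i * A * eD j = 0 := by
  apply Subtype.ext
  show Matrix.single i i (1 : R) * (A : Matrix (Fin n) (Fin n) R) * Matrix.single j j 1 = _
  rw [stdBasis_conj, one_mul, mul_one, A.2 h, Matrix.single_zero]
  rfl

lemma decomp (A : triangularSubalgebra T R n) :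
    A = ∑ i, ∑ j, eD i * A * eD j := by
  have : (∑ i, ∑ j, eD i * A * eD j : triangularSubalgebra T R n)
      = (∑ i, eD i) * A * (∑ j, eD j) := by
    rw [Finset.sum_mul, Finset.sum_mul]
    congr 1
    ext i
    rw [Finset.mul_sum]
  rw [this, sum_eD, one_mul, mul_one]

/-- Diagonal matrices in the triangular algebra. -/
def Dg (d : Fin n → R) : triangularSubalgebra T R n :=
  ⟨Matrix.diagonal d, fun a b hba => Matrix.diagonal_apply_ne d (ne_of_gt hba)⟩

@[simp] lemma ent_Dg (d : Fin n → R) (a b : Fin n) :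
    ent (Dg d : triangularSubalgebra T R n) a b = if a = b then d a else 0 :=
  Matrix.diagonal_apply d a b

lemma Dg_mul_Dg (d d' : Fin n → R) : (Dg d : triangularSubalgebra T R n) * Dg d'
    = Dg (fun i => d i * d' i) :=
  Subtype.ext (Matrix.diagonal_mul_diagonal d d')

lemma Dg_one : (Dg (fun _ => 1) : triangularSubalgebra T R n) = 1 :=
  Subtype.ext Matrix.diagonal_one

lemma Dg_mul_Mel (d : Fin n → R) (i j : Fin n) (h : i ≤ j) (r : R) :
    (Dg d : triangularSubalgebra T R n) * Mel i j h r = Mel i j h (d i * r) := by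
  apply Kext
  intro a b
  rw [ent_mul]
  rw [Finset.sum_eq_single a (fun y _ hy => by simp [ent_Dg, Ne.symm hy]) (by simp)]
  simp only [ent_Dg, if_pos rfl, ent_Mel]
  by_cases hc : i = a ∧ j = b
  · obtain ⟨rfl, rfl⟩ := hc
    simp
  · rw [if_neg hc, if_neg hc, mul_zero]

lemma Mel_mul_Dg (d : Fin n → R) (i j : Fin n) (h : i ≤ j) (r : R) :
    (Mel i j h r : triangularSubalgebra T R n) * Dg d = Mel i j h (r * d j) := by
  apply Kext
  intro a b
  rw [ent_mul]
  rw [Finset.sum_eq_single b (fun y _ hy => by simp [ent_Dg, hy]) (by simp)]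
  simp only [ent_Dg, if_pos rfl, ent_Mel]
  by_cases hc : i = a ∧ j = b
  · obtain ⟨rfl, rfl⟩ := hc
    simp
  · rw [if_neg hc, if_neg hc, zero_mul]

/-- The canonical chain of idempotents: `P k` is the identity on the last `k` coordinates. -/
def Pc (k : ℕ) : triangularSubalgebra T R n :=
  Dg (fun i => if n - k ≤ i.val then 1 else 0)

lemma Pc_zero : (Pc 0 : triangularSubalgebra T R n) = 0 := by
  apply Kext
  intro a b
  simp only [Pc, ent_Dg, ent_zero]
  have ha : ¬ (n - 0 ≤ a.val) := by have := a.isLt; omega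
  simp [ha]

lemma Pc_mul_Pc (k k' : ℕ) :
    (Pc k : triangularSubalgebra T R n) * Pc k' = Pc (min k k') := by
  rw [Pc, Pc, Dg_mul_Dg]
  congr 1
  funext i
  by_cases h1 : n - k ≤ i.val <;> by_cases h2 : n - k' ≤ i.val <;>
    [skip; skip; skip; skip] <;>
    · have h3 : (n - min k k' ≤ i.val) ∨ ¬ (n - min k k' ≤ i.val) := em _
      rcases h3 with h3 | h3 <;> simp [h1, h2, h3] <;> omega


lemma Pc_mul_Pc_le {k k' : ℕ} (h : k ≤ k') :
    (Pc k : triangularSubalgebra T R n) * Pc k' = Pc k := by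
  rw [Pc_mul_Pc, min_eq_left h]

lemma Pc_mul_Pc_ge {k k' : ℕ} (h : k' ≤ k) :
    (Pc k : triangularSubalgebra T R n) * Pc k' = Pc k' := by
  rw [Pc_mul_Pc, min_eq_right h]

lemma eD_eq_Pc_sub (hn : 1 ≤ n) (i : Fin n) :
    (eD i : triangularSubalgebra T R n) = Pc (n - i.val) - Pc (n - i.val - 1) := by
  apply Kext
  intro a b
  have hi := i.isLt
  simp only [eD, ent_Mel, ent_sub, Pc, ent_Dg]
  by_cases hab : a = b
  · subst hab
    by_cases hai : i = a
    · subst hai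
      have h1 : n - (n - i.val) ≤ i.val := by omega
      have h2 : ¬ (n - (n - i.val - 1) ≤ i.val) := by omega
      simp [h1, h2]
    · rw [if_neg (fun hc => hai hc.1)]
      have hval : a.val ≠ i.val := fun hv => hai (Fin.ext hv.symm)
      by_cases h1 : n - (n - i.val) ≤ a.val
      · have h2 : n - (n - i.val - 1) ≤ a.val := by omega
        simp [h1, h2]
      · have h2 : ¬ (n - (n - i.val - 1) ≤ a.val) := by omega
        simp [h1, h2]
  · rw [if_neg (fun hc => hab (hc.1.symm.trans hc.2)), if_neg hab, if_neg hab, sub_zero]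

/-- membership in strictlyUpper -/
lemma mem_N_iff {A : triangularSubalgebra T R n} :
    A ∈ strictlyUpper T R n ↔ ∀ i j : Fin n, j ≤ i → ent A i j = 0 := Iff.rfl

lemma Mel_mem_N {i j : Fin n} (h : i < j) (r : R) :
    (Mel i j h.le r : triangularSubalgebra T R n) ∈ strictlyUpper T R n := by
  intro a b hba
  show ent (Mel i j h.le r : triangularSubalgebra T R n) a b = 0
  rw [ent_Mel, if_neg]
  rintro ⟨rfl, rfl⟩
  exact absurd h (not_lt.mpr hba)

lemma N_mul3 (b c : triangularSubalgebra T R n) {x : triangularSubalgebra T R n}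
    (hx : x ∈ strictlyUpper T R n) : b * x * c ∈ strictlyUpper T R n := by
  intro i j hji
  show ent (b * x * c) i j = 0
  rw [ent_mul]
  refine Finset.sum_eq_zero fun l _ => ?_
  by_cases hl : l ≤ j
  · rw [ent_mul]
    rw [Finset.sum_eq_zero, zero_mul]
    intro k _
    by_cases hk : k < i
    · rw [show ent b i k = 0 from b.2 hk, zero_mul]
    · have : l ≤ k := hl.trans (hji.trans (not_lt.mp hk))
      rw [show ent x k l = 0 from hx k l this, mul_zero]
  · rw [show ent c l j = 0 from c.2 (not_le.mp hl), mul_zero]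

/-- Entries of products of strictly upper elements vanish below the `length`-th diagonal. -/
lemma Nprod (l : List (triangularSubalgebra T R n)) (hl : ∀ x ∈ l, x ∈ strictlyUpper T R n) :
    ∀ i j : Fin n, j.val < i.val + l.length → ent l.prod i j = 0 := by
  induction l with
  | nil =>
    intro i j hij
    simp only [List.prod_nil, List.length_nil, Nat.add_zero] at *
    rw [ent_one, if_neg]
    intro h; rw [h] at hij; omega
  | cons x l' ih =>
    intro i j hij
    rw [List.prod_cons, ent_mul]
    refine Finset.sum_eq_zero fun k _ => ?_
    by_cases hk : k ≤ i
    · rw [show ent x i k = 0 from hl x (List.mem_cons_self) i k hk, zero_mul]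
    · have hik : i.val < k.val := not_le.mp hk
      rw [ih (fun y hy => hl y (List.mem_cons_of_mem x hy)) k j
        (by simp only [List.length_cons] at hij; omega), mul_zero]

lemma Nprod_zero (l : List (triangularSubalgebra T R n))
    (hl : ∀ x ∈ l, x ∈ strictlyUpper T R n) (hlen : n ≤ l.length) : l.prod = 0 := by
  apply Kext
  intro a b
  rw [ent_zero]
  exact Nprod l hl a b (by have := b.isLt; omega)


/-- The algebraic characterization of strict upper triangularity. -/
def Cprop (a : triangularSubalgebra T R n) : Prop :=
  ∀ l : List (triangularSubalgebra T R n × triangularSubalgebra T R n),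
    n ≤ l.length → (l.map fun p => p.1 * a * p.2).prod = 0

lemma C_of_mem_N {a : triangularSubalgebra T R n} (ha : a ∈ strictlyUpper T R n) :
    Cprop a := by
  intro l hlen
  apply Nprod_zero
  · intro x hx
    rw [List.mem_map] at hx
    obtain ⟨p, -, rfl⟩ := hx
    exact N_mul3 p.1 p.2 ha
  · rw [List.length_map]; exact hlen

lemma Mel_diag_prod (i : Fin n) (x : R) (lR : List (R × R)) :
    ent ((lR.map fun p => (Mel i i le_rfl (p.1 * x * p.2) :
        triangularSubalgebra T R n)).prod) i i
      = (lR.map fun p => p.1 * x * p.2).prod := by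
  induction lR with
  | nil => simp
  | cons q lR' ih =>
    rw [List.map_cons, List.prod_cons, List.map_cons, List.prod_cons, ← ih]
    show ((Matrix.single i i (q.1 * x * q.2) *
      ((lR'.map fun p => (Mel i i le_rfl (p.1 * x * p.2) :
        triangularSubalgebra T R n)).prod : triangularSubalgebra T R n)) :
          Matrix (Fin n) (Fin n) R) i i = _
    rw [Matrix.single_mul_apply_same]
    rfl

lemma mem_N_of_C (hn : 1 ≤ n)
    (hsp : ∀ I : TwoSidedIdeal R, (∀ x ∈ I, ∀ y ∈ I, x * y = 0) → I = ⊥)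
    {a : triangularSubalgebra T R n} (hC : Cprop a) : a ∈ strictlyUpper T R n := by
  intro i j hji
  rcases lt_or_eq_of_le hji with h | h
  · exact a.2 h
  · subst h
    show ent a j j = 0
    apply sp_list hsp n hn (ent a j j)
    intro lR hlen
    have key : ∀ p : R × R,
        (Mel j j le_rfl p.1 : triangularSubalgebra T R n) * a * Mel j j le_rfl p.2
          = Mel j j le_rfl (p.1 * ent a j j * p.2) := by
      intro p
      apply Subtype.ext
      show Matrix.single j j p.1 * (a : Matrix (Fin n) (Fin n) R) * Matrix.single j j p.2 = _
      rw [stdBasis_conj]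
      rfl
    have hC' := hC (lR.map fun p => (Mel j j le_rfl p.1, Mel j j le_rfl p.2))
      (by rw [List.length_map]; exact hlen)
    rw [List.map_map] at hC'
    have heq : ((lR.map fun p => ((Mel j j le_rfl p.1 : triangularSubalgebra T R n) * a *
        Mel j j le_rfl p.2))).prod = 0 := hC'
    rw [show (lR.map fun p => ((Mel j j le_rfl p.1 : triangularSubalgebra T R n) * a *
        Mel j j le_rfl p.2)) = lR.map fun p => (Mel j j le_rfl (p.1 * ent a j j * p.2) :
        triangularSubalgebra T R n) from List.map_congr_left (fun p _ => key p)] at heq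
    have := Mel_diag_prod (T := T) j (ent a j j) lR
    rw [heq, ent_zero] at this
    exact this.symm

lemma C_pres (χ : triangularSubalgebra T R n ≃ₐ[T] triangularSubalgebra T R n)
    {a : triangularSubalgebra T R n} (hC : Cprop a) : Cprop (χ a) := by
  intro l hlen
  have hmap : (l.map fun p => p.1 * χ a * p.2)
      = ((l.map fun p => (χ.symm p.1, χ.symm p.2)).map fun p => p.1 * a * p.2).map χ := by
    rw [List.map_map, List.map_map]
    apply List.map_congr_left
    intro p _
    show p.1 * χ a * p.2 = χ (χ.symm p.1 * a * χ.symm p.2)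
    rw [_root_.map_mul, _root_.map_mul, AlgEquiv.apply_symm_apply, AlgEquiv.apply_symm_apply]
  rw [hmap, ← map_list_prod χ, hC _ (by simpa using hlen), map_zero]

lemma N_pres (hn : 1 ≤ n)
    (hsp : ∀ I : TwoSidedIdeal R, (∀ x ∈ I, ∀ y ∈ I, x * y = 0) → I = ⊥)
    (χ : triangularSubalgebra T R n ≃ₐ[T] triangularSubalgebra T R n)
    {a : triangularSubalgebra T R n} (ha : a ∈ strictlyUpper T R n) :
    χ a ∈ strictlyUpper T R n :=
  mem_N_of_C hn hsp (C_pres χ (C_of_mem_N ha))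


section Conj
variable {T A : Type*} [CommRing T] [Ring A] [Algebra T A]


set_option maxHeartbeats 1000000 in
/-- Conjugation by a unit as an algebra automorphism. -/
def conjE' (u : Aˣ) : A ≃ₐ[T] A where
  toFun a := ↑u * a * ↑u⁻¹
  invFun a := ↑u⁻¹ * a * ↑u
  left_inv a := by
    show ↑u⁻¹ * (↑u * a * ↑u⁻¹) * ↑u = a
    simp only [← mul_assoc, Units.inv_mul, one_mul]
    rw [mul_assoc, Units.inv_mul, mul_one]
  right_inv a := by
    show ↑u * (↑u⁻¹ * a * ↑u) * ↑u⁻¹ = a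
    simp only [← mul_assoc, Units.mul_inv, one_mul]
    rw [mul_assoc, Units.mul_inv, mul_one]
  map_mul' a b := by
    show ↑u * (a * b) * ↑u⁻¹ = (↑u * a * ↑u⁻¹) * (↑u * b * ↑u⁻¹)
    simp only [← mul_assoc]
    rw [mul_assoc (↑u * a) (↑u⁻¹) (↑u), Units.inv_mul, mul_one]
  map_add' a b := by
    show ↑u * (a + b) * ↑u⁻¹ = (↑u * a * ↑u⁻¹) + (↑u * b * ↑u⁻¹)
    rw [mul_add, add_mul]
  commutes' t := by
    show ↑u * (algebraMap T A) t * ↑u⁻¹ = (algebraMap T A) t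
    rw [← Algebra.commutes t (↑u : A), mul_assoc, Units.mul_inv, mul_one]

@[simp] lemma conjE'_apply (u : Aˣ) (a : A) : conjE' (T := T) u a = ↑u * a * ↑u⁻¹ := rfl

section IdemRing
variable {B : Type*} [Ring B]

lemma idem_unit1 {P Q : B} (hPP : P * P = P) (hQQ : Q * Q = Q) (hQP : Q * P = Q)
    (hPQ : P * Q = P) : (1 + Q - P) * (1 + P - Q) = 1 := by
  simp only [mul_add, add_mul, mul_sub, sub_mul, one_mul, mul_one, hPP, hQQ, hQP, hPQ]
  abel

lemma idem_unit2 {P Q : B} (hPP : P * P = P) (hQQ : Q * Q = Q) (hQP : Q * P = Q)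
    (hPQ : P * Q = P) : (1 + P - Q) * (1 + Q - P) = 1 := by
  simp only [mul_add, add_mul, mul_sub, sub_mul, one_mul, mul_one, hPP, hQQ, hQP, hPQ]
  abel

lemma idem_conj_fix {P Q X : B} (hPX : P * X = X) (hXP : X * P = X) (hQX : Q * X = X)
    (hXQ : X * Q = X) : (1 + P - Q) * X * (1 + Q - P) = X := by
  simp only [mul_add, add_mul, mul_sub, sub_mul, one_mul, mul_one, hPX, hXP, hQX, hXQ]
  abel

lemma idem_conj_move {P Q : B} (hPP : P * P = P) (hQQ : Q * Q = Q) (hQP : Q * P = Q)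
    (hPQ : P * Q = P) : (1 + P - Q) * Q * (1 + Q - P) = P := by
  simp only [mul_add, add_mul, mul_sub, sub_mul, one_mul, mul_one, hPP, hQQ, hQP, hPQ]
  abel

lemma reassoc5 {x y a z w : B} : (x * y) * a * (z * w) = x * (y * a * z) * w := by
  simp only [mul_assoc]

end IdemRing

end Conj

/-- The left annihilator condition. -/
def Lset (k : ℕ) : Set (triangularSubalgebra T R n) :=
  {A | ∀ l : List (triangularSubalgebra T R n), l.length = k →
    (∀ x ∈ l, x ∈ strictlyUpper T R n) → A * l.prod = 0}

lemma ent_mul_Dg (A : triangularSubalgebra T R n) (d : Fin n → R) (a b : Fin n) :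
    ent (A * Dg d) a b = ent A a b * d b := by
  show ((A * Dg d : triangularSubalgebra T R n) : Matrix (Fin n) (Fin n) R) a b = _
  rw [MulMemClass.coe_mul]
  exact Matrix.mul_diagonal d _ a b

lemma ent_Dg_mul (A : triangularSubalgebra T R n) (d : Fin n → R) (a b : Fin n) :
    ent (Dg d * A) a b = d a * ent A a b := by
  show ((Dg d * A : triangularSubalgebra T R n) : Matrix (Fin n) (Fin n) R) a b = _
  rw [MulMemClass.coe_mul]
  exact Matrix.diagonal_mul d _ a b

lemma Pc_mem_L (k : ℕ) : (Pc k : triangularSubalgebra T R n) ∈ Lset k := by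
  intro l hlen hl
  apply Kext
  intro a b
  rw [ent_zero, Pc, ent_Dg_mul]
  by_cases ha : n - k ≤ a.val
  · rw [Nprod l hl a b (by have := b.isLt; omega), mul_zero]
  · rw [if_neg ha, zero_mul]

lemma L_pres (hn : 1 ≤ n)
    (hsp : ∀ I : TwoSidedIdeal R, (∀ x ∈ I, ∀ y ∈ I, x * y = 0) → I = ⊥)
    (χ : triangularSubalgebra T R n ≃ₐ[T] triangularSubalgebra T R n) {k : ℕ}
    {A : triangularSubalgebra T R n} (hA : A ∈ Lset k) : χ A ∈ Lset k := by
  intro l hlen hl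
  have h1 : A * (l.map χ.symm).prod = 0 :=
    hA _ (by rw [List.length_map]; exact hlen)
      (fun x hx => by
        rw [List.mem_map] at hx
        obtain ⟨y, hy, rfl⟩ := hx
        exact N_pres hn hsp χ.symm (hl y hy))
  have h2 := congrArg χ h1
  rw [_root_.map_mul, map_zero, map_list_prod, List.map_map] at h2
  have h3 : List.map (⇑χ ∘ ⇑χ.symm) l = List.map id l :=
    List.map_congr_left (fun x _ => by simp)
  rw [h3, List.map_id] at h2
  exact h2

/-- A product of consecutive superdiagonal matrix units. -/
lemma Echain : ∀ k : ℕ, 1 ≤ k → ∀ (j : Fin n) (hjk : j.val + k < n),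
    ∃ l : List (triangularSubalgebra T R n), l.length = k ∧
      (∀ x ∈ l, x ∈ strictlyUpper T R n) ∧
      (l.prod : Matrix (Fin n) (Fin n) R) = Matrix.single j ⟨j.val + k, hjk⟩ 1 := by
  intro k
  induction k with
  | zero => omega
  | succ k ih =>
    intro _ j hjk
    by_cases hk : 1 ≤ k
    · obtain ⟨l', hlen', hl', hprod'⟩ := ih hk ⟨j.val + 1, by omega⟩ (by simp; omega)
      have hlt : j < (⟨j.val + 1, by omega⟩ : Fin n) := by
        rw [Fin.lt_def]; simp
      refine ⟨Mel j ⟨j.val + 1, by omega⟩ hlt.le 1 :: l', by simp [hlen'], ?_, ?_⟩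
      · intro x hx
        rcases List.mem_cons.mp hx with rfl | hx
        · exact Mel_mem_N hlt 1
        · exact hl' x hx
      · rw [List.prod_cons, MulMemClass.coe_mul, hprod']
        show Matrix.single j (⟨j.val + 1, by omega⟩ : Fin n) (1 : R) * _ = _
        rw [Matrix.single_mul_single_same, one_mul]
        exact congrArg (fun z : Fin n => Matrix.single j z (1 : R))
          (Fin.ext (by simp; omega))
    · have hk0 : k = 0 := by omega
      subst hk0
      have hlt : j < (⟨j.val + 1, hjk⟩ : Fin n) := by rw [Fin.lt_def]; simp
      refine ⟨[Mel j ⟨j.val + 1, hjk⟩ hlt.le 1], by simp, ?_, ?_⟩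
      · intro x hx
        rcases List.mem_cons.mp hx with rfl | hx
        · exact Mel_mem_N hlt 1
        · simp at hx
      · simp only [List.prod_cons, List.prod_nil, mul_one]
        rfl

lemma L_to_right {k : ℕ} {A : triangularSubalgebra T R n} (hA : A ∈ Lset k) :
    A * Pc k = A := by
  by_cases hk : 1 ≤ k
  · apply Kext
    intro a b
    rw [Pc, ent_mul_Dg]
    by_cases hb : n - k ≤ b.val
    · rw [if_pos hb, mul_one]
    · rw [if_neg hb, mul_zero]
      have hbk : b.val + k < n := by omega
      obtain ⟨l, hlen, hl, hprod⟩ := Echain (T := T) (R := R) k hk b hbk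
      have h0 := hA l hlen hl
      have : ent (A * l.prod) a ⟨b.val + k, hbk⟩ = 0 := by rw [h0, ent_zero]
      rw [show ent (A * l.prod) a ⟨b.val + k, hbk⟩
          = ent A a b * 1 from by
        show ((A * l.prod : triangularSubalgebra T R n) :
          Matrix (Fin n) (Fin n) R) a ⟨b.val + k, hbk⟩ = _
        rw [MulMemClass.coe_mul, hprod]
        exact Matrix.mul_single_apply_same 1 b (⟨b.val + k, hbk⟩ : Fin n) a _, mul_one] at this
      exact this.symm
  · have hk0 : k = 0 := by omega
    subst hk0
    have := hA [] rfl (by simp)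
    rw [List.prod_nil, mul_one] at this
    rw [this, Pc_zero, zero_mul]

lemma chainfact (hn : 1 ≤ n)
    (hsp : ∀ I : TwoSidedIdeal R, (∀ x ∈ I, ∀ y ∈ I, x * y = 0) → I = ⊥)
    (χ : triangularSubalgebra T R n ≃ₐ[T] triangularSubalgebra T R n) (k : ℕ) :
    χ (Pc k) * Pc k = χ (Pc k) ∧ Pc k * χ (Pc k) = Pc k := by
  constructor
  · exact L_to_right (L_pres hn hsp χ (Pc_mem_L k))
  · have h1 : χ.symm (Pc k) * Pc k = χ.symm (Pc k) :=
      L_to_right (L_pres hn hsp χ.symm (Pc_mem_L k))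
    have h2 := congrArg χ h1
    rw [_root_.map_mul, AlgEquiv.apply_symm_apply] at h2
    exact h2


set_option maxHeartbeats 4000000 in
lemma chain (hn : 1 ≤ n)
    (hsp : ∀ I : TwoSidedIdeal R, (∀ x ∈ I, ∀ y ∈ I, x * y = 0) → I = ⊥)
    (φ : triangularSubalgebra T R n ≃ₐ[T] triangularSubalgebra T R n) (m : ℕ) :
    ∃ u : (triangularSubalgebra T R n)ˣ,
      ∀ k ≤ m, (↑u⁻¹ * φ (Pc k) * ↑u : triangularSubalgebra T R n) = Pc k := by
  induction m with
  | zero =>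
    refine ⟨1, fun k hk => ?_⟩
    have hk0 : k = 0 := Nat.le_zero.mp hk
    subst hk0
    rw [Pc_zero, map_zero, mul_zero, zero_mul]
  | succ m ih =>
    obtain ⟨u, hu⟩ := ih
    set χ : triangularSubalgebra T R n ≃ₐ[T] triangularSubalgebra T R n :=
      φ.trans (conjE' (T := T) u⁻¹) with hχdef
    have hχ : ∀ A, χ A = ↑u⁻¹ * φ A * ↑u := fun A => by
      show conjE' (T := T) u⁻¹ (φ A) = _
      rw [conjE'_apply, inv_inv]
    have hχk : ∀ k ≤ m, χ (Pc k) = Pc k := fun k hk => by rw [hχ]; exact hu k hk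
    set Q : triangularSubalgebra T R n := χ (Pc (m+1)) with hQdef
    set P : triangularSubalgebra T R n := Pc (m+1) with hPdef
    obtain ⟨hQP, hPQ⟩ := chainfact hn hsp χ (m+1)
    have hQQ : Q * Q = Q := by rw [hQdef, ← _root_.map_mul, Pc_mul_Pc, min_self]
    have hPP : P * P = P := by rw [hPdef, Pc_mul_Pc, min_self]
    have hQk : ∀ k ≤ m, Q * Pc k = Pc k := fun k hk => by
      rw [hQdef, ← hχk k hk, ← _root_.map_mul, Pc_mul_Pc_ge (by omega), hχk k hk]
    have hkQ : ∀ k ≤ m, (Pc k : triangularSubalgebra T R n) * Q = Pc k := fun k hk => by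
      rw [hQdef, ← hχk k hk, ← _root_.map_mul, Pc_mul_Pc_le (by omega), hχk k hk]
    have hv1 : (1 + Q - P) * (1 + P - Q) = 1 := idem_unit1 hPP hQQ hQP hPQ
    have hv2 : (1 + P - Q) * (1 + Q - P) = 1 := idem_unit2 hPP hQQ hQP hPQ
    refine ⟨u * ⟨1 + Q - P, 1 + P - Q, hv1, hv2⟩, fun k hk => ?_⟩
    set v : (triangularSubalgebra T R n)ˣ := ⟨1 + Q - P, 1 + P - Q, hv1, hv2⟩ with hvdef
    have hvinv : (↑v⁻¹ : triangularSubalgebra T R n) = 1 + P - Q := rfl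
    have hvval : (↑v : triangularSubalgebra T R n) = 1 + Q - P := rfl
    rw [_root_.mul_inv_rev, Units.val_mul, Units.val_mul, reassoc5]
    rcases Nat.lt_or_ge k (m + 1) with hkm | hkm
    · have hkm' : k ≤ m := by omega
      rw [hu k hkm', hvinv, hvval]
      have h1 : (Pc k : triangularSubalgebra T R n) * P = Pc k := Pc_mul_Pc_le (by omega)
      have h2 : P * (Pc k : triangularSubalgebra T R n) = Pc k := Pc_mul_Pc_ge (by omega)
      exact idem_conj_fix h2 h1 (hQk k hkm') (hkQ k hkm')
    · have hkm1 : k = m + 1 := by omega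
      subst hkm1
      rw [show (↑u⁻¹ * φ (Pc (m+1)) * ↑u : triangularSubalgebra T R n) = Q from (hχ _).symm]
      rw [hvinv, hvval]
      exact idem_conj_move hPP hQQ hQP hPQ


section Beta

variable (ψ : triangularSubalgebra T R n ≃ₐ[T] triangularSubalgebra T R n)

/-- The action of `ψ` on the `(i,j)` Peirce component. -/
def betaF (i j : Fin n) (h : i ≤ j) (r : R) : R := ent (ψ (Mel i j h r)) i j

variable (hψe : ∀ i : Fin n, ψ (eD i) = eD i)

include hψe in
lemma beta_Mel (i j : Fin n) (h : i ≤ j) (r : R) :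
    ψ (Mel i j h r) = Mel i j h (betaF ψ i j h r) := by
  have h1 : (eD i : triangularSubalgebra T R n) * Mel i j h r * eD j = Mel i j h r := by
    rw [eD_mul_mul_eD (Mel i j h r) i j h, ent_Mel_same]
  conv_lhs => rw [← h1]
  rw [_root_.map_mul, _root_.map_mul, hψe, hψe, eD_mul_mul_eD _ i j h]
  rfl

lemma beta_add (i j : Fin n) (h : i ≤ j) (r s : R) :
    betaF ψ i j h (r + s) = betaF ψ i j h r + betaF ψ i j h s := by
  unfold betaF
  rw [Mel_add, map_add, ent_add]

lemma beta_zero (i j : Fin n) (h : i ≤ j) : betaF ψ i j h 0 = 0 := by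
  unfold betaF
  rw [Mel_zero, map_zero, ent_zero]

lemma beta_smul (i j : Fin n) (h : i ≤ j) (t : T) (r : R) :
    betaF ψ i j h (t • r) = t • betaF ψ i j h r := by
  unfold betaF
  rw [Mel_smul, _root_.map_smul, ent_smul]

include hψe in
lemma beta_one (i : Fin n) : betaF ψ i i le_rfl 1 = 1 := by
  unfold betaF
  rw [show (Mel i i le_rfl 1 : triangularSubalgebra T R n) = eD i from rfl, hψe]
  rw [show (eD i : triangularSubalgebra T R n) = Mel i i le_rfl 1 from rfl, ent_Mel_same]

include hψe in
lemma beta_mul (i j l : Fin n) (hij : i ≤ j) (hjl : j ≤ l) (r s : R) :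
    betaF ψ i l (hij.trans hjl) (r * s) = betaF ψ i j hij r * betaF ψ j l hjl s := by
  have e1 : ψ (Mel i l (hij.trans hjl) (r * s))
      = Mel i l (hij.trans hjl) (betaF ψ i j hij r * betaF ψ j l hjl s) := by
    rw [← Mel_mul_Mel i j l hij hjl r s, _root_.map_mul, beta_Mel ψ hψe i j hij r,
      beta_Mel ψ hψe j l hjl s, Mel_mul_Mel]
  show ent (ψ (Mel i l (hij.trans hjl) (r * s))) i l = _
  rw [e1, ent_Mel_same]

include hψe in
lemma beta_surj (i j : Fin n) (h : i ≤ j) (s : R) : ∃ r, betaF ψ i j h r = s := by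
  have hψe' : ∀ i : Fin n, ψ.symm (eD i) = eD i := fun i => by
    conv_lhs => rw [← hψe i]
    exact ψ.symm_apply_apply _
  set B := ψ.symm (Mel i j h s) with hB
  have h1 : (eD i : triangularSubalgebra T R n) * Mel i j h s * eD j = Mel i j h s := by
    rw [eD_mul_mul_eD (Mel i j h s) i j h, ent_Mel_same]
  have h2 : (eD i : triangularSubalgebra T R n) * B * eD j = B := by
    rw [hB, ← hψe' i, ← hψe' j, ← _root_.map_mul, ← _root_.map_mul, h1]
  have h3 : Mel i j h (ent B i j) = B := by
    rw [← eD_mul_mul_eD B i j h]; exact h2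
  refine ⟨ent B i j, ?_⟩
  show ent (ψ (Mel i j h (ent B i j))) i j = s
  rw [h3, hB, ψ.apply_symm_apply, ent_Mel_same]

include hψe in
lemma beta_inj (i j : Fin n) (h : i ≤ j) (r : R) (hr : betaF ψ i j h r = 0) : r = 0 := by
  have h1 : ψ (Mel i j h r) = ψ 0 := by
    rw [beta_Mel ψ hψe i j h r, hr, Mel_zero, map_zero]
  have h2 := ψ.injective h1
  have := congrArg (fun X => ent X i j) h2
  simpa [ent_Mel_same] using this

end Beta


section Emap
variable (al : R ≃ₐ[T] R)

@[simp] lemma ent_emap (A : triangularSubalgebra T R n) (a b : Fin n) :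
    ent (entrywiseMap T R n al A) a b = al (ent A a b) := rfl

lemma emap_Mel (i j : Fin n) (h : i ≤ j) (r : R) :
    entrywiseMap T R n al (Mel i j h r) = Mel i j h (al r) := by
  apply Kext
  intro a b
  rw [ent_emap, ent_Mel, ent_Mel]
  by_cases hc : i = a ∧ j = b
  · rw [if_pos hc, if_pos hc]
  · rw [if_neg hc, if_neg hc, map_zero]

lemma emap_add (X Y : triangularSubalgebra T R n) :
    entrywiseMap T R n al (X + Y) = entrywiseMap T R n al X + entrywiseMap T R n al Y := by
  apply Kext
  intro a b
  rw [ent_add, ent_emap, ent_emap, ent_emap, ent_add, map_add]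

lemma emap_zero : entrywiseMap T R n al 0 = 0 := by
  apply Kext
  intro a b
  rw [ent_emap, ent_zero, map_zero]

/-- `entrywiseMap` as an additive monoid hom. -/
def EMh : triangularSubalgebra T R n →+ triangularSubalgebra T R n :=
  AddMonoidHom.mk' (entrywiseMap T R n al) (emap_add al)

end Emap

lemma conj_cancel {M : Type*} [Monoid M] (u : Mˣ) (a : M) :
    ↑u * (↑u⁻¹ * a * ↑u) * ↑u⁻¹ = a := by
  simp [mul_assoc]

end Stmt11Aux

open Stmt11Aux

set_option maxHeartbeats 4000000

/-- If `R` is a semiprime `T`-algebra (no nonzero two-sided ideal with zero square), every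
`T`-algebra automorphism of the upper triangular matrix algebra `T(n,R)` is a product of
an inner automorphism and a ring automorphism. -/
theorem stmt11 (T R : Type*) [CommRing T] [Ring R] [Algebra T R] (n : ℕ) (hn : 1 ≤ n)
    (hsemiprime : ∀ I : TwoSidedIdeal R, (∀ x ∈ I, ∀ y ∈ I, x * y = 0) → I = ⊥)
    (φ : triangularSubalgebra T R n ≃ₐ[T] triangularSubalgebra T R n) :
    ∃ (u : (triangularSubalgebra T R n)ˣ) (α : R ≃ₐ[T] R),
      ∀ A : triangularSubalgebra T R n,
        φ A = ↑u * entrywiseMap T R n α A * ↑u⁻¹ := by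
  classical
  obtain ⟨u, hu⟩ := chain hn hsemiprime φ n
  set ψ : triangularSubalgebra T R n ≃ₐ[T] triangularSubalgebra T R n :=
    φ.trans (conjE' (T := T) u⁻¹) with hψdef
  have hψ : ∀ A, ψ A = ↑u⁻¹ * φ A * ↑u := fun A => by
    show conjE' (T := T) u⁻¹ (φ A) = _
    rw [conjE'_apply, inv_inv]
  have hψe : ∀ i : Fin n, ψ (eD i) = eD i := by
    intro i
    rw [eD_eq_Pc_sub hn i, map_sub, hψ, hψ, hu _ (by omega), hu _ (by omega)]
  -- the zero index
  set i0 : Fin n := ⟨0, hn⟩ with hi0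
  have hle0 : ∀ j : Fin n, i0 ≤ j := fun j => by
    rw [Fin.le_def]; exact Nat.zero_le _
  -- the automorphism α of R
  have hbij : Function.Bijective (fun r => betaF ψ i0 i0 le_rfl r) := by
    constructor
    · intro r s hrs
      simp only at hrs
      have h1 := beta_add ψ i0 i0 le_rfl (r - s) s
      rw [sub_add_cancel] at h1
      have h2 : betaF ψ i0 i0 le_rfl (r - s) = 0 := by
        rw [hrs] at h1
        have h3 : betaF ψ i0 i0 le_rfl (r - s) + betaF ψ i0 i0 le_rfl s
            = 0 + betaF ψ i0 i0 le_rfl s := by rw [zero_add]; exact h1.symm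
        exact add_right_cancel h3
      have := beta_inj ψ hψe i0 i0 le_rfl (r - s) h2
      exact sub_eq_zero.mp this
    · intro s
      exact beta_surj ψ hψe i0 i0 le_rfl s
  set A0 : R →ₐ[T] R :=
    { toFun := fun r => betaF ψ i0 i0 le_rfl r
      map_one' := beta_one ψ hψe i0
      map_mul' := fun r s => beta_mul ψ hψe i0 i0 i0 le_rfl le_rfl r s
      map_zero' := beta_zero ψ i0 i0 le_rfl
      map_add' := beta_add ψ i0 i0 le_rfl
      commutes' := fun t => by
        show betaF ψ i0 i0 le_rfl ((algebraMap T R) t) = (algebraMap T R) t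
        rw [Algebra.algebraMap_eq_smul_one, beta_smul ψ i0 i0 le_rfl t 1,
          beta_one ψ hψe i0] } with hA0
  set α : R ≃ₐ[T] R := AlgEquiv.ofBijective A0 hbij with hαdef
  have hα : ∀ x : R, α x = betaF ψ i0 i0 le_rfl x := fun x => rfl
  -- the diagonal unit
  choose r1 hr1 using fun j => beta_surj ψ hψe i0 j (hle0 j) 1
  set v : Fin n → R := fun j => betaF ψ i0 j (hle0 j) 1 with hv
  set w : Fin n → R := fun j => betaF ψ j j le_rfl (r1 j) with hw
  have hvw : ∀ j, v j * w j = 1 := by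
    intro j
    have := beta_mul ψ hψe i0 j j (hle0 j) le_rfl 1 (r1 j)
    rw [one_mul, hr1 j] at this
    exact this.symm
  have hαv : ∀ j, betaF ψ i0 i0 le_rfl (r1 j) * v j = 1 := by
    intro j
    have := beta_mul ψ hψe i0 i0 j le_rfl (hle0 j) (r1 j) 1
    rw [mul_one, hr1 j] at this
    exact this.symm
  have hwα : ∀ j, w j = betaF ψ i0 i0 le_rfl (r1 j) := by
    intro j
    calc w j = 1 * w j := (one_mul _).symm
      _ = (betaF ψ i0 i0 le_rfl (r1 j) * v j) * w j := by rw [hαv j]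
      _ = betaF ψ i0 i0 le_rfl (r1 j) * (v j * w j) := by rw [mul_assoc]
      _ = betaF ψ i0 i0 le_rfl (r1 j) := by rw [hvw j, mul_one]
  have hwv : ∀ j, w j * v j = 1 := fun j => by rw [hwα j]; exact hαv j
  -- the beta formula
  have hbf : ∀ (i j : Fin n) (h : i ≤ j) (x : R),
      betaF ψ i j h x = w i * (betaF ψ i0 i0 le_rfl x * v j) := by
    intro i j h x
    have ha := beta_mul ψ hψe i0 i j (hle0 i) h 1 x
    rw [one_mul] at ha
    have hb := beta_mul ψ hψe i0 i0 j le_rfl (hle0 j) x 1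
    rw [mul_one] at hb
    have h1 : v i * betaF ψ i j h x = betaF ψ i0 i0 le_rfl x * v j := by
      simp only [hv]
      rw [← ha, ← hb]
    calc betaF ψ i j h x = (w i * v i) * betaF ψ i j h x := by rw [hwv i, one_mul]
      _ = w i * (v i * betaF ψ i j h x) := by rw [mul_assoc]
      _ = w i * (betaF ψ i0 i0 le_rfl x * v j) := by rw [h1]
  -- the diagonal unit W
  have hWa : (Dg v : triangularSubalgebra T R n) * Dg w = 1 := by
    rw [Dg_mul_Dg, show (fun i => v i * w i) = fun _ : Fin n => (1 : R) from
      funext fun i => hvw i, Dg_one]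
  have hWb : (Dg w : triangularSubalgebra T R n) * Dg v = 1 := by
    rw [Dg_mul_Dg, show (fun i => w i * v i) = fun _ : Fin n => (1 : R) from
      funext fun i => hwv i, Dg_one]
  set W : (triangularSubalgebra T R n)ˣ := ⟨Dg v, Dg w, hWa, hWb⟩ with hW
  have hWval : (↑W : triangularSubalgebra T R n) = Dg v := rfl
  have hWinv : (↑W⁻¹ : triangularSubalgebra T R n) = Dg w := rfl
  -- the main pointwise identity
  have hpiece : ∀ (A : triangularSubalgebra T R n) (i j : Fin n),
      ψ (eD i * A * eD j) = ↑W⁻¹ * entrywiseMap T R n α (eD i * A * eD j) * ↑W := by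
    intro A i j
    rcases le_or_gt i j with h | h
    · rw [eD_mul_mul_eD A i j h, beta_Mel ψ hψe i j h, emap_Mel, hWval, hWinv,
        Dg_mul_Mel, Mel_mul_Dg]
      congr 1
      rw [hbf i j h (ent A i j), hα, mul_assoc]
    · rw [eD_mul_mul_eD_zero A h, map_zero, emap_zero, mul_zero, zero_mul]
  have hmain : ∀ A, ψ A = ↑W⁻¹ * entrywiseMap T R n α A * ↑W := by
    intro A
    rw [decomp A]
    rw [show entrywiseMap T R n α (∑ i, ∑ j, eD i * A * eD j)
        = ∑ i, ∑ j, entrywiseMap T R n α (eD i * A * eD j) from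
      (map_sum (EMh α) _ _).trans (Finset.sum_congr rfl fun i _ => map_sum (EMh α) _ _)]
    rw [map_sum]
    simp only [map_sum, Finset.mul_sum, Finset.sum_mul]
    exact Finset.sum_congr rfl fun i _ => Finset.sum_congr rfl fun j _ => hpiece A i j
  -- assemble
  refine ⟨u * W⁻¹, α, fun A => ?_⟩
  have hφA : φ A = ↑u * ψ A * ↑u⁻¹ := by
    rw [hψ A, conj_cancel]
  rw [hφA, hmain A]
  simp only [Units.val_mul, _root_.mul_inv_rev, inv_inv, mul_assoc]
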